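/- Let n ≥ 1, 1 ≤ k ≤ n, 1 ≤ i ≤ n, and let r₁, …, r_n be real numbers. Then the polynomial σ_k(r+tI), which has degree k in t, has only real roots (splits over ℝ), and the polynomial q_{i,k}(t), which has degree k−1 in t, has only real roots (splits over ℝ). -/

import Mathlib

open Polynomial

/-- `σ_m(r+tI) = Σ_{1≤i₁<…<i_m≤n} (t+r_{i₁})⋯(t+r_{i_m})` as a real polynomial in `t`. -/
noncomputable def sigmaTP (n : ℕ) (r : Fin n → ℝ) (m : ℕ) : Polynomial ℝ :=
  ∑ s ∈ Finset.powersetCard m (Finset.univ : Finset (Fin n)),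
    ∏ i ∈ s, (X + C (r i))

/-- `q_{i,k}(t) = Σ_{j=0}^{k−1} (−1)^j σ_{k−1−j}(r+tI) (t+r_i)^j`. -/
noncomputable def qPoly (n : ℕ) (r : Fin n → ℝ) (i : Fin n) (k : ℕ) : Polynomial ℝ :=
  ∑ j ∈ Finset.range k, ((-1 : ℝ) ^ j) • (sigmaTP n r (k - 1 - j) * (X + C (r i)) ^ j)

/-- `p_{k+1}(t) = (r₀₀ + t) σ_k(r+tI) − Σ_{i=1}^n q_{i,k}(t) x_i²`. -/
noncomputable def pPoly (n k : ℕ) (r₀₀ : ℝ) (r : Fin n → ℝ) (x : Fin n → ℝ) :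
    Polynomial ℝ :=
  (X + C r₀₀) * sigmaTP n r k - ∑ i : Fin n, ((x i) ^ 2) • qPoly n r i k

/-- `π_n(t) = (t+r₁)⋯(t+r_n)`. -/
noncomputable def piN (n : ℕ) (r : Fin n → ℝ) : Polynomial ℝ :=
  ∏ i : Fin n, (X + C (r i))

/-- `π_{i,n}(t) = ∏_{j≠i} (t+r_j)`. -/
noncomputable def piIN (n : ℕ) (r : Fin n → ℝ) (i : Fin n) : Polynomial ℝ :=
  ∏ j ∈ Finset.univ.erase i, (X + C (r j))

/-! ### Auxiliary definitions and lemmas -/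

/-- Elementary symmetric polynomial (in `t`) over a finset of indices. -/
noncomputable def sigmaF {n : ℕ} (r : Fin n → ℝ) (s : Finset (Fin n)) (m : ℕ) : Polynomial ℝ :=
  ∑ t ∈ Finset.powersetCard m s, ∏ j ∈ t, (X + C (r j))

lemma sigmaTP_eq_sigmaF (n : ℕ) (r : Fin n → ℝ) (m : ℕ) :
    sigmaTP n r m = sigmaF r Finset.univ m := rfl

lemma sigmaF_zero {n : ℕ} (r : Fin n → ℝ) (s : Finset (Fin n)) :
    sigmaF r s 0 = 1 := by
  simp [sigmaF]

lemma sigmaF_self {n : ℕ} (r : Fin n → ℝ) (s : Finset (Fin n)) :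
    sigmaF r s s.card = ∏ j ∈ s, (X + C (r j)) := by
  simp [sigmaF, Finset.powersetCard_self]

lemma sigmaF_insert {n : ℕ} (r : Fin n → ℝ) {s : Finset (Fin n)} {i : Fin n}
    (hi : i ∉ s) (m : ℕ) :
    sigmaF r (insert i s) (m + 1) =
      sigmaF r s (m + 1) + (X + C (r i)) * sigmaF r s m := by
  unfold sigmaF
  rw [Finset.powersetCard_succ_insert hi, Finset.sum_union, Finset.sum_image, Finset.mul_sum]
  · congr 1
    refine Finset.sum_congr rfl fun t ht => ?_
    rw [Finset.mem_powersetCard] at ht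
    rw [Finset.prod_insert (fun h => hi (ht.1 h))]
  · intro t ht u hu htu
    rw [Finset.mem_coe, Finset.mem_powersetCard] at ht hu
    have hit : i ∉ t := fun h => hi (ht.1 h)
    have hiu : i ∉ u := fun h => hi (hu.1 h)
    rw [← Finset.erase_insert hit, htu, Finset.erase_insert hiu]
  · rw [Finset.disjoint_right]
    intro t ht ht'
    rw [Finset.mem_image] at ht
    obtain ⟨u, hu, rfl⟩ := ht
    rw [Finset.mem_powersetCard] at ht' hu
    exact hi (ht'.1 (Finset.mem_insert_self i u))

lemma derivative_finset_prod {ι : Type*} [DecidableEq ι] (t : Finset ι) (f : ι → Polynomial ℝ) :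
    derivative (∏ j ∈ t, f j) = ∑ j ∈ t, (∏ l ∈ t.erase j, f l) * derivative (f j) := by
  induction t using Finset.induction_on with
  | empty => simp
  | @insert a t ha ih =>
    have hs : ∀ j ∈ t, f a * ((∏ l ∈ t.erase j, f l) * derivative (f j))
        = (∏ l ∈ (insert a t).erase j, f l) * derivative (f j) := by
      intro j hj
      have hja : j ≠ a := fun h => ha (h ▸ hj)
      rw [Finset.erase_insert_of_ne hja.symm,
        Finset.prod_insert (fun h => ha (Finset.mem_of_mem_erase h)), mul_assoc]
    rw [Finset.prod_insert ha, derivative_mul, ih, Finset.mul_sum,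
      Finset.sum_congr rfl hs, Finset.sum_insert ha, Finset.erase_insert ha]
    ring

lemma derivative_sigmaF {n : ℕ} (r : Fin n → ℝ) (s : Finset (Fin n)) (m : ℕ) :
    derivative (sigmaF r s (m + 1)) = (s.card - m) • sigmaF r s m := by
  unfold sigmaF
  rw [map_sum]
  have h1 : ∀ t ∈ Finset.powersetCard (m + 1) s,
      derivative (∏ j ∈ t, (X + C (r j))) = ∑ j ∈ t, ∏ l ∈ t.erase j, (X + C (r l)) := by
    intro t _
    rw [derivative_finset_prod]
    refine Finset.sum_congr rfl fun j _ => by simp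
  have h2 : ∑ t ∈ Finset.powersetCard (m + 1) s, derivative (∏ j ∈ t, (X + C (r j)))
      = ∑ t ∈ Finset.powersetCard (m + 1) s, ∑ j ∈ t, ∏ l ∈ t.erase j, (X + C (r l)) :=
    Finset.sum_congr rfl h1
  rw [h2, Finset.sum_sigma' (Finset.powersetCard (m + 1) s) (fun t => t)
      (fun t j => ∏ l ∈ t.erase j, (X + C (r l)))]
  have key : ∑ p ∈ (Finset.powersetCard (m + 1) s).sigma (fun t => t),
        ∏ l ∈ p.1.erase p.2, (X + C (r l))
      = ∑ p ∈ (Finset.powersetCard m s).sigma (fun u => s \ u),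
        ∏ l ∈ p.1, (X + C (r l)) := by
    refine Finset.sum_nbij' (fun p => ⟨p.1.erase p.2, p.2⟩) (fun p => ⟨insert p.2 p.1, p.2⟩)
      ?_ ?_ ?_ ?_ ?_
    · rintro ⟨t, j⟩ hp
      rw [Finset.mem_sigma, Finset.mem_powersetCard] at hp
      rw [Finset.mem_sigma, Finset.mem_powersetCard]
      refine ⟨⟨(Finset.erase_subset _ _).trans hp.1.1, ?_⟩, ?_⟩
      · rw [Finset.card_erase_of_mem hp.2, hp.1.2]
        omega
      · rw [Finset.mem_sdiff]
        exact ⟨hp.1.1 hp.2, Finset.notMem_erase _ _⟩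
    · rintro ⟨u, j⟩ hp
      rw [Finset.mem_sigma, Finset.mem_powersetCard, Finset.mem_sdiff] at hp
      rw [Finset.mem_sigma, Finset.mem_powersetCard]
      refine ⟨⟨Finset.insert_subset hp.2.1 hp.1.1, ?_⟩, Finset.mem_insert_self _ _⟩
      rw [Finset.card_insert_of_notMem hp.2.2, hp.1.2]
    · rintro ⟨t, j⟩ hp
      rw [Finset.mem_sigma] at hp
      simp only [Finset.insert_erase hp.2]
    · rintro ⟨u, j⟩ hp
      rw [Finset.mem_sigma, Finset.mem_powersetCard, Finset.mem_sdiff] at hp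
      simp only [Finset.erase_insert hp.2.2]
    · rintro ⟨t, j⟩ _; rfl
  rw [key, Finset.sum_sigma, Finset.smul_sum]
  refine Finset.sum_congr rfl fun u hu => ?_
  rw [Finset.mem_powersetCard] at hu
  show ∑ _x ∈ s \ u, ∏ l ∈ u, (X + C (r l)) = _
  rw [Finset.sum_const, Finset.card_sdiff_of_subset hu.1, hu.2]

lemma iterate_derivative_prod {n : ℕ} (r : Fin n → ℝ) (s : Finset (Fin n)) (j : ℕ)
    (hj : j ≤ s.card) :
    derivative^[j] (∏ l ∈ s, (X + C (r l))) = j.factorial • sigmaF r s (s.card - j) := by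
  induction j with
  | zero => simp [sigmaF_self]
  | succ j ih =>
    have hj' : j ≤ s.card := Nat.le_of_succ_le hj
    rw [Function.iterate_succ_apply', ih hj', derivative_smul]
    have hm : s.card - j = (s.card - (j + 1)) + 1 := by omega
    rw [hm, derivative_sigmaF]
    have hc : s.card - (s.card - (j + 1)) = j + 1 := by omega
    rw [hc, smul_smul, Nat.factorial_succ, Nat.mul_comm]

lemma natDegree_deriv_of_ne_zero (q : Polynomial ℝ) (h : q.natDegree ≠ 0) :
    (derivative q).natDegree = q.natDegree - 1 :=
  natDegree_eq_of_degree_eq_some (degree_derivative_eq q (Nat.pos_of_ne_zero h))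

lemma natDegree_iterate_deriv (p : Polynomial ℝ) (j : ℕ) (hj : j ≤ p.natDegree) :
    (derivative^[j] p).natDegree = p.natDegree - j := by
  induction j with
  | zero => simp
  | succ j ih =>
    have hj' : j ≤ p.natDegree := Nat.le_of_succ_le hj
    have h4 := ih hj'
    rw [Function.iterate_succ_apply', natDegree_deriv_of_ne_zero _ (by rw [h4]; omega), h4]
    omega

lemma splits_derivative (p : Polynomial ℝ) (hp : p.Splits) :
    (derivative p).Splits := by
  by_cases h0 : derivative p = 0
  · rw [h0]; exact Splits.zero
  have hd : p.natDegree ≠ 0 := by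
    intro h
    exact h0 (by rw [Polynomial.eq_C_of_natDegree_eq_zero h, derivative_C])
  rw [splits_iff_card_roots] at hp ⊢
  have h1 : Multiset.card (derivative p).roots ≤ (derivative p).natDegree :=
    card_roots' _
  have h2 : Multiset.card p.roots ≤ Multiset.card (derivative p).roots + 1 :=
    card_roots_le_derivative p
  have h3 : (derivative p).natDegree = p.natDegree - 1 := natDegree_deriv_of_ne_zero p hd
  omega

lemma splits_iterate_derivative (p : Polynomial ℝ) (j : ℕ) (hp : p.Splits) :
    (derivative^[j] p).Splits := by
  induction j with
  | zero => exact hp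
  | succ j ih => rw [Function.iterate_succ_apply']; exact splits_derivative _ ih

lemma sigmaF_natDegree_splits {n : ℕ} (r : Fin n → ℝ) (s : Finset (Fin n)) (m : ℕ)
    (hm : m ≤ s.card) :
    (sigmaF r s m).natDegree = m ∧ (sigmaF r s m).Splits := by
  set j := s.card - m with hjdef
  have hj : j ≤ s.card := Nat.sub_le _ _
  have hsm : s.card - j = m := by omega
  have hiter := iterate_derivative_prod r s j hj
  rw [hsm] at hiter
  have hC : (j.factorial : ℕ) • sigmaF r s m = C ((j.factorial : ℝ)) * sigmaF r s m := by
    rw [← Nat.cast_smul_eq_nsmul ℝ, smul_eq_C_mul]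
  rw [hC] at hiter
  have hfac : ((j.factorial : ℝ)) ≠ 0 := Nat.cast_ne_zero.mpr (Nat.factorial_ne_zero j)
  have hdegprod : (∏ l ∈ s, (X + C (r l))).natDegree = s.card := by
    rw [natDegree_prod_of_monic _ _ (fun l _ => monic_X_add_C (r l))]
    simp [natDegree_X_add_C]
  have hdeg : (sigmaF r s m).natDegree = m := by
    have := natDegree_iterate_deriv (∏ l ∈ s, (X + C (r l))) j (by rw [hdegprod]; exact hj)
    rw [hiter, natDegree_C_mul hfac, hdegprod, hsm] at this
    exact this
  refine ⟨hdeg, ?_⟩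
  by_cases hzero : sigmaF r s m = 0
  · rw [hzero]; exact Splits.zero
  have hsplitsprod : (∏ l ∈ s, (X + C (r l))).Splits :=
    Splits.prod fun l _ => Splits.X_add_C (r l)
  have hsplits := splits_iterate_derivative _ j hsplitsprod
  rw [hiter] at hsplits
  exact hsplits.of_dvd (mul_ne_zero (by simpa using hfac) hzero) (dvd_mul_left _ _)

lemma qPoly_succ (n k : ℕ) (r : Fin n → ℝ) (i : Fin n) :
    qPoly n r i (k + 1) = sigmaTP n r k - (X + C (r i)) * qPoly n r i k := by
  unfold qPoly
  rw [Finset.sum_range_succ', Finset.mul_sum]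
  have h0 : ((-1 : ℝ) ^ (0 : ℕ)) • (sigmaTP n r (k + 1 - 1 - 0) * (X + C (r i)) ^ (0 : ℕ))
      = sigmaTP n r k := by simp
  rw [h0]
  have hterm : ∀ j ∈ Finset.range k,
      ((-1 : ℝ) ^ (j + 1)) • (sigmaTP n r (k + 1 - 1 - (j + 1)) * (X + C (r i)) ^ (j + 1))
      = -((X + C (r i)) * (((-1 : ℝ) ^ j) • (sigmaTP n r (k - 1 - j) * (X + C (r i)) ^ j))) := by
    intro j _
    have hidx : k + 1 - 1 - (j + 1) = k - 1 - j := by omega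
    rw [hidx, pow_succ, pow_succ]
    simp only [smul_eq_C_mul, map_mul, map_pow, map_neg, map_one]
    ring
  rw [Finset.sum_congr rfl hterm, Finset.sum_neg_distrib]
  ring

lemma qPoly_eq_sigmaF (n : ℕ) (r : Fin n → ℝ) (i : Fin n) (k : ℕ) (hk : 1 ≤ k) :
    qPoly n r i k = sigmaF r (Finset.univ.erase i) (k - 1) := by
  induction k with
  | zero => omega
  | succ k ih =>
    rcases Nat.eq_or_lt_of_le hk with h1 | h2
    · -- k + 1 = 1, i.e. k = 0
      have hk0 : k = 0 := by omega
      subst hk0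
      unfold qPoly
      rw [Finset.sum_range_one]
      simp [sigmaF_zero, sigmaTP_eq_sigmaF]
    · have hk1 : 1 ≤ k := by omega
      rw [qPoly_succ, ih hk1]
      have hins : (Finset.univ : Finset (Fin n)) = insert i (Finset.univ.erase i) :=
        (Finset.insert_erase (Finset.mem_univ i)).symm
      have hins' : sigmaTP n r k = sigmaF r (Finset.univ.erase i) k
          + (X + C (r i)) * sigmaF r (Finset.univ.erase i) (k - 1) := by
        rw [sigmaTP_eq_sigmaF]
        conv_lhs => rw [hins]
        have hkk : k = (k - 1) + 1 := by omega
        rw [hkk, sigmaF_insert r (Finset.notMem_erase i _) (k - 1), ← hkk]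
      rw [hins']
      ring_nf
      simp

/-- `σ_k(r+tI)` has degree `k` and only real roots, and `q_{i,k}`
has degree `k−1` and only real roots. -/
theorem sigmaTP_and_qPoly_real_rooted (n k : ℕ) (hn : 1 ≤ n) (hk1 : 1 ≤ k) (hkn : k ≤ n)
    (i : Fin n) (r : Fin n → ℝ) :
    (sigmaTP n r k).natDegree = k ∧ (sigmaTP n r k).Splits ∧
      (qPoly n r i k).natDegree = k - 1 ∧ (qPoly n r i k).Splits := by
  have hcard : (Finset.univ : Finset (Fin n)).card = n := by simp
  have hs := sigmaF_natDegree_splits r Finset.univ k (by rw [hcard]; exact hkn)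
  have hcard' : (Finset.univ.erase i).card = n - 1 := by
    rw [Finset.card_erase_of_mem (Finset.mem_univ i), hcard]
  have hq := sigmaF_natDegree_splits r (Finset.univ.erase i) (k - 1)
    (by rw [hcard']; omega)
  rw [sigmaTP_eq_sigmaF, qPoly_eq_sigmaF n r i k hk1]
  exact ⟨hs.1, hs.2, hq.1, hq.2⟩
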